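/- Let G be a t-connected simple graph with t ≥ 3 and |V(G)| ≥ 2(t−h)+3, where 0 ≤ h ≤ ⌊(t−1)/2⌋. Let F_e be an edge set with |F_e| ≤ h and F₁, F₂ distinct vertex subsets indistinguishable in G − F_e under the MM* model, with |F₁ ∩ F₂| ≤ t − h − 1 and V ≠ F₁ ∪ F₂. Then for every vertex u ∈ V − (F₁ ∪ F₂), |F₁ ∩ F₂| ≥ deg_G(u) − h − 2 ≥ t − h − 2. -/

import Mathlib

open SimpleGraph Finset

variable {V : Type*}

/-- The vertex connectivity of a finite simple graph: the minimum size of a vertex set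
whose removal leaves a graph that is disconnected or has at most one vertex. -/
noncomputable def vConn [Fintype V] (G : SimpleGraph V) : ℕ :=
  sInf {n | ∃ S : Finset V, S.card = n ∧
    (((↑S : Set V)ᶜ).Subsingleton ∨ ¬ (G.induce ((↑S : Set V)ᶜ)).Connected)}


/-- Two fault sets are distinguishable under the MM* model (Sengupta–Dahbura). -/
def mmDistinguishable [DecidableEq V] (G : SimpleGraph V) (F1 F2 : Finset V) : Prop :=
  (∃ u w v : V, u ∉ F1 ∪ F2 ∧ w ∉ F1 ∪ F2 ∧ v ∈ (F1 \ F2) ∪ (F2 \ F1) ∧ G.Adj u v ∧ G.Adj u w) ∨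
  (∃ u v w : V, u ∈ F1 \ F2 ∧ v ∈ F1 \ F2 ∧ u ≠ v ∧ w ∉ F1 ∪ F2 ∧ G.Adj u w ∧ G.Adj v w) ∨
  (∃ u v w : V, u ∈ F2 \ F1 ∧ v ∈ F2 \ F1 ∧ u ≠ v ∧ w ∉ F1 ∪ F2 ∧ G.Adj u w ∧ G.Adj v w)

/-- Auxiliary: restriction of a graph to a vertex set, as a graph on the same vertex type. -/
def grRes (G' : SimpleGraph V) (s : Set V) : SimpleGraph V where
  Adj x y := G'.Adj x y ∧ x ∈ s ∧ y ∈ s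
  symm := ⟨fun x y h => ⟨h.1.symm, h.2.2, h.2.1⟩⟩
  loopless := ⟨fun x h => G'.loopless.irrefl x h.1⟩

lemma walk_ind {G' : SimpleGraph V} {P : V → Prop}
    (hstep : ∀ a b, G'.Adj a b → P a → P b) {a b : V} (p : G'.Walk a b) : P a → P b := by
  induction p with
  | nil => exact id
  | cons h q ih => exact fun ha => ih (hstep _ _ h ha)

lemma induce_reach {G' : SimpleGraph V} {s : Set V} {a b : ↥s}
    (p : (G'.induce s).Walk a b) : (grRes G' s).Reachable ↑a ↑b := by
  induction p with
  | nil => exact SimpleGraph.Reachable.refl _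
  | @cons x y z h q ih =>
    exact (SimpleGraph.Adj.reachable (⟨h, x.2, y.2⟩ : (grRes G' s).Adj ↑x ↑y)).trans ih

lemma vConn_le_degree [Fintype V] [DecidableEq V] (G : SimpleGraph V) [DecidableRel G.Adj]
    (v : V) : vConn G ≤ G.degree v := by
  classical
  have hmem : G.degree v ∈ {n | ∃ S : Finset V, S.card = n ∧
      (((↑S : Set V)ᶜ).Subsingleton ∨ ¬ (G.induce ((↑S : Set V)ᶜ)).Connected)} := by
    refine ⟨G.neighborFinset v, rfl, ?_⟩
    by_cases hs : ((↑(G.neighborFinset v) : Set V)ᶜ).Subsingleton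
    · exact Or.inl hs
    refine Or.inr fun hc => ?_
    rw [Set.not_subsingleton_iff] at hs
    obtain ⟨x, hx, y, hy, hxy⟩ := hs
    have hv : v ∈ (↑(G.neighborFinset v) : Set V)ᶜ := by simp
    obtain ⟨z, hz, hzv⟩ : ∃ z, z ∈ (↑(G.neighborFinset v) : Set V)ᶜ ∧ z ≠ v := by
      by_cases hxv : x = v
      · exact ⟨y, hy, by rw [← hxv]; exact fun h => hxy h.symm⟩
      · exact ⟨x, hx, hxv⟩
    obtain ⟨p⟩ := hc.preconnected ⟨v, hv⟩ ⟨z, hz⟩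
    obtain ⟨q⟩ := induce_reach p
    refine hzv (walk_ind (P := fun a => a = v) ?_ q rfl)
    rintro a b ⟨hab, _, hbs⟩ rfl
    exact absurd (by simpa using hab) (by simpa using hbs)
  exact Nat.sInf_le hmem

theorem mm_intersection_bound [Fintype V] [DecidableEq V] (G : SimpleGraph V)
    [DecidableRel G.Adj] (t h : ℕ) (ht3 : 3 ≤ t) (ht : t ≤ vConn G)
    (hh : h ≤ (t - 1) / 2) (hV : 2 * (t - h) + 3 ≤ Fintype.card V)
    (Fe : Finset (Sym2 V)) (hFe : ↑Fe ⊆ G.edgeSet) (hFec : Fe.card ≤ h)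
    (F1 F2 : Finset V) (hne : F1 ≠ F2)
    (hind : ¬ mmDistinguishable (G.deleteEdges ↑Fe) F1 F2)
    (hcap : (F1 ∩ F2).card ≤ t - h - 1) (hV2 : F1 ∪ F2 ≠ Finset.univ) :
    ∀ u : V, u ∉ F1 ∪ F2 →
      G.degree u - h - 2 ≤ (F1 ∩ F2).card ∧ t - h - 2 ≤ G.degree u - h - 2 := by
  classical
  have hmindeg : ∀ v : V, t ≤ G.degree v := fun v => le_trans ht (vConn_le_degree G v)
  intro u hu
  have huK : u ∉ F1 ∩ F2 := fun hk => hu (Finset.mem_union_left _ (Finset.mem_inter.mp hk).1)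
  set Gd := G.deleteEdges ↑Fe with hGdDef
  -- Case B is impossible
  have hnoB : ¬ ∃ w, w ∉ F1 ∪ F2 ∧ Gd.Adj u w := by
    rintro ⟨w, hw, hadjw⟩
    -- a vertex in the symmetric difference
    obtain ⟨z0, hz0⟩ : ((F1 \ F2) ∪ (F2 \ F1)).Nonempty := by
      rcases Finset.eq_empty_or_nonempty ((F1 \ F2) ∪ (F2 \ F1)) with he | hne'
      · exact absurd (Finset.Subset.antisymm
          (Finset.sdiff_eq_empty_iff_subset.mp (Finset.union_eq_empty.mp he).1)
          (Finset.sdiff_eq_empty_iff_subset.mp (Finset.union_eq_empty.mp he).2)) hne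
      · exact hne'
    have hz0uni : z0 ∈ F1 ∪ F2 := by
      simp only [Finset.mem_union, Finset.mem_sdiff] at hz0 ⊢; tauto
    have hz0K : z0 ∉ F1 ∩ F2 := by
      simp only [Finset.mem_union, Finset.mem_sdiff] at hz0
      simp only [Finset.mem_inter]; tauto
    set Gdk := grRes Gd {x | x ∉ F1 ∩ F2} with hGdk
    -- invariant along reachability from u
    have hInv : ∀ v, Gdk.Reachable u v →
        v ∉ F1 ∪ F2 ∧ (v = u ∨ ∃ q, q ∉ F1 ∪ F2 ∧ Gd.Adj v q) := by
      intro v hv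
      obtain ⟨p⟩ := hv
      refine walk_ind (P := fun v => v ∉ F1 ∪ F2 ∧ (v = u ∨ ∃ q, q ∉ F1 ∪ F2 ∧ Gd.Adj v q)) ?_ p ⟨hu, Or.inl rfl⟩
      rintro a b ⟨hab, haK, hbK⟩ ⟨haU, hWit⟩
      have hbU : b ∉ F1 ∪ F2 := by
        intro hbU
        have hbSD : b ∈ (F1 \ F2) ∪ (F2 \ F1) := by
          simp only [Set.mem_setOf_eq, Finset.mem_inter, not_and] at hbK
          simp only [Finset.mem_union, Finset.mem_sdiff] at hbU ⊢
          tauto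
        rcases hWit with rfl | ⟨q, hq, haq⟩
        · exact hind (Or.inl ⟨a, w, b, haU, hw, hbSD, hab, hadjw⟩)
        · exact hind (Or.inl ⟨a, q, b, haU, hq, hbSD, hab, haq⟩)
      exact ⟨hbU, Or.inr ⟨a, haU, hab.symm⟩⟩
    -- picks
    have hex : ∀ e : Sym2 V, ∃ v, v ∈ e := by
      intro e
      induction e using Sym2.inductionOn with
      | hf a b => exact ⟨a, by simp⟩
    set pick : Sym2 V → V := fun e => (hex e).choose with hpickdef
    have hpick : ∀ e, pick e ∈ e := fun e => (hex e).choose_spec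
    set P := Fe.image pick with hP
    set S := (F1 ∩ F2) ∪ P with hSdef
    -- the counting lemma
    have hcount : ∀ x : V, t ≤ (F1 ∩ F2).card + Fe.card +
        (({x} ∪ (univ.filter (fun v => Gd.Adj x v ∧ v ∉ F1 ∩ F2))) \ P).card := by
      intro x
      set N := univ.filter (fun v => Gd.Adj x v ∧ v ∉ F1 ∩ F2) with hN
      have hxN : x ∉ N := by simp [hN]
      have h1 : G.neighborFinset x ⊆ (F1 ∩ F2) ∪ N ∪ (univ.filter (fun v => s(x,v) ∈ Fe)) := by
        intro v hv
        rw [SimpleGraph.mem_neighborFinset] at hv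
        by_cases hef : s(x,v) ∈ Fe
        · simp [hef]
        · have hGd : Gd.Adj x v := by
            rw [hGdDef, SimpleGraph.deleteEdges_adj]
            exact ⟨hv, by simpa using hef⟩
          by_cases hvK : v ∈ F1 ∩ F2
          · simp [hvK]
          · have hvN : v ∈ N := Finset.mem_filter.mpr ⟨Finset.mem_univ _, hGd, hvK⟩
            simp [hvN]
      have h2 : (univ.filter (fun v => s(x,v) ∈ Fe)).card ≤ (Fe.filter (fun e => x ∈ e)).card := by
        apply Finset.card_le_card_of_injOn (fun v => s(x,v))
        · intro v hv
          simp only [Finset.coe_filter, Set.mem_setOf_eq, Finset.mem_coe, Finset.mem_filter, Finset.mem_univ, true_and] at hv ⊢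
          exact ⟨hv, Sym2.mem_mk_left x v⟩
        · intro a _ b _ hab
          exact Sym2.congr_right.mp hab
      have h3 : ({x} ∪ N) ∩ P ⊆ {x} ∪ ((Fe.filter (fun e => x ∉ e)).image pick) := by
        intro v hv
        rw [Finset.mem_inter] at hv
        obtain ⟨hvXN, hvP⟩ := hv
        rw [hP, Finset.mem_image] at hvP
        obtain ⟨e, he, hpe⟩ := hvP
        by_cases hxe : x ∈ e
        · obtain ⟨y, rfl⟩ := Sym2.mem_iff_exists.mp hxe
          have hvm : v = x ∨ v = y := Sym2.mem_iff.mp (hpe ▸ hpick _)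
          rcases hvm with rfl | rfl
          · exact Finset.mem_union_left _ (Finset.mem_singleton_self v)
          · exfalso
            have hyx : v ≠ x := by
              rintro rfl
              exact G.loopless.irrefl v (hFe he)
            have hnadj : ¬ Gd.Adj x v := by
              rw [hGdDef, SimpleGraph.deleteEdges_adj]
              rintro ⟨_, hbad⟩
              exact hbad (by exact_mod_cast he)
            rcases Finset.mem_union.mp hvXN with hm | hm
            · exact hyx (Finset.mem_singleton.mp hm)
            · rw [hN, Finset.mem_filter] at hm
              exact hnadj hm.2.1
        · exact Finset.mem_union_right _
            (Finset.mem_image.mpr ⟨e, Finset.mem_filter.mpr ⟨he, hxe⟩, hpe⟩)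
      have c1 : t ≤ G.degree x := hmindeg x
      have c2 : (G.neighborFinset x).card ≤
          ((F1 ∩ F2) ∪ N).card + (univ.filter (fun v => s(x,v) ∈ Fe)).card :=
        le_trans (Finset.card_le_card h1) (Finset.card_union_le _ _)
      have c2' : ((F1 ∩ F2) ∪ N).card ≤ (F1 ∩ F2).card + N.card := Finset.card_union_le _ _
      have cdeg : G.degree x = (G.neighborFinset x).card := rfl
      have c3 : ({x} ∪ N).card = 1 + N.card := by
        rw [Finset.card_union_of_disjoint (Finset.disjoint_singleton_left.mpr hxN)]
        simp
      have c4 : (({x} ∪ N) ∩ P).card + (({x} ∪ N) \ P).card = ({x} ∪ N).card :=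
        Finset.card_inter_add_card_sdiff _ _
      have c5 : (({x} ∪ N) ∩ P).card ≤ 1 + (Fe.filter (fun e => x ∉ e)).card := by
        refine le_trans (Finset.card_le_card h3) (le_trans (Finset.card_union_le _ _) ?_)
        simp only [Finset.card_singleton]
        exact Nat.add_le_add_left (Finset.card_image_le) 1
      have c6 : (Fe.filter (fun e => x ∈ e)).card + (Fe.filter (fun e => x ∉ e)).card = Fe.card :=
        Finset.card_filter_add_card_filter_not _
      omega
    have hcards : (F1 ∩ F2).card + Fe.card ≤ t - 1 := by omega
    -- x on the u-side
    obtain ⟨x, hx⟩ : ((({u} ∪ (univ.filter (fun v => Gd.Adj u v ∧ v ∉ F1 ∩ F2))) \ P)).Nonempty := by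
      rw [← Finset.card_pos]
      have := hcount u
      omega
    rw [Finset.mem_sdiff] at hx
    obtain ⟨hxUN, hxP⟩ := hx
    have hxK : x ∉ F1 ∩ F2 := by
      rcases Finset.mem_union.mp hxUN with hm | hm
      · rwa [Finset.mem_singleton.mp hm]
      · exact ((Finset.mem_filter.mp hm).2).2
    have hxA : Gdk.Reachable u x := by
      rcases Finset.mem_union.mp hxUN with hm | hm
      · rw [Finset.mem_singleton.mp hm]
      · have hm' := (Finset.mem_filter.mp hm).2
        exact SimpleGraph.Adj.reachable ⟨hm'.1, huK, hm'.2⟩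
    have hxS : x ∉ S := by
      rw [hSdef, Finset.mem_union]
      tauto
    -- y on the z0-side
    obtain ⟨y, hy⟩ : ((({z0} ∪ (univ.filter (fun v => Gd.Adj z0 v ∧ v ∉ F1 ∩ F2))) \ P)).Nonempty := by
      rw [← Finset.card_pos]
      have := hcount z0
      omega
    rw [Finset.mem_sdiff] at hy
    obtain ⟨hyUN, hyP⟩ := hy
    have hyK : y ∉ F1 ∩ F2 := by
      rcases Finset.mem_union.mp hyUN with hm | hm
      · rwa [Finset.mem_singleton.mp hm]
      · exact ((Finset.mem_filter.mp hm).2).2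
    have hyS : y ∉ S := by
      rw [hSdef, Finset.mem_union]
      tauto
    have hyA : ¬ Gdk.Reachable u y := by
      intro hr
      obtain ⟨hyU, hWit⟩ := hInv y hr
      rcases Finset.mem_union.mp hyUN with hm | hm
      · exact hyU (Finset.mem_singleton.mp hm ▸ hz0uni)
      · have hadj : Gd.Adj z0 y := (Finset.mem_filter.mp hm).2.1
        rcases hWit with rfl | ⟨q, hq, hyq⟩
        · exact hind (Or.inl ⟨y, w, z0, hyU, hw, hz0, hadj.symm, hadjw⟩)
        · exact hind (Or.inl ⟨y, q, z0, hyU, hq, hz0, hadj.symm, hyq⟩)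
    -- the separator S disconnects
    have hnc : ¬ (G.induce ((↑S : Set V)ᶜ)).Connected := by
      intro hc
      have hxS' : x ∈ (↑S : Set V)ᶜ := by simpa using hxS
      have hyS' : y ∈ (↑S : Set V)ᶜ := by simpa using hyS
      obtain ⟨p⟩ := hc.preconnected ⟨x, hxS'⟩ ⟨y, hyS'⟩
      obtain ⟨q⟩ := induce_reach p
      apply hyA
      have : Gdk.Reachable u x → Gdk.Reachable u y := by
        intro hux
        refine walk_ind (P := fun v => Gdk.Reachable u v) ?_ q hux
        rintro a b ⟨hab, haS, hbS⟩ haA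
        have haS2 : a ∉ S := by simpa using haS
        have hbS2 : b ∉ S := by simpa using hbS
        by_cases hef : s(a,b) ∈ Fe
        · exfalso
          have hmemP : pick s(a,b) ∈ P := by
            rw [hP]
            exact Finset.mem_image_of_mem pick hef
          rcases Sym2.mem_iff.mp (hpick s(a,b)) with hpa | hpb
          · exact haS2 (by rw [hSdef, Finset.mem_union]; exact Or.inr (hpa ▸ hmemP))
          · exact hbS2 (by rw [hSdef, Finset.mem_union]; exact Or.inr (hpb ▸ hmemP))
        · have hGadj : Gd.Adj a b := by
            rw [hGdDef, SimpleGraph.deleteEdges_adj]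
            exact ⟨hab, by simpa using hef⟩
          have haK : a ∉ F1 ∩ F2 := fun hmem =>
            haS2 (by rw [hSdef, Finset.mem_union]; exact Or.inl hmem)
          have hbK : b ∉ F1 ∩ F2 := fun hmem =>
            hbS2 (by rw [hSdef, Finset.mem_union]; exact Or.inl hmem)
          exact haA.trans (SimpleGraph.Adj.reachable ⟨hGadj, haK, hbK⟩)
      exact this hxA
    have hvle : vConn G ≤ S.card := Nat.sInf_le ⟨S, rfl, Or.inr hnc⟩
    have hScard : S.card ≤ (F1 ∩ F2).card + Fe.card :=
      le_trans (Finset.card_union_le _ _) (Nat.add_le_add_left Finset.card_image_le _)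
    omega
  -- now the degree count (case A)
  push_neg at hnoB
  have hsub : G.neighborFinset u ⊆ (F1 ∩ F2) ∪ ((F1 \ F2).filter (fun v => Gd.Adj u v))
      ∪ ((F2 \ F1).filter (fun v => Gd.Adj u v)) ∪ (univ.filter (fun v => s(u,v) ∈ Fe)) := by
    intro v hv
    rw [SimpleGraph.mem_neighborFinset] at hv
    by_cases hef : s(u,v) ∈ Fe
    · simp [hef]
    · have hGd : Gd.Adj u v := by
        rw [hGdDef, SimpleGraph.deleteEdges_adj]
        exact ⟨hv, by simpa using hef⟩
      have hvU : v ∈ F1 ∪ F2 := by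
        by_contra hvU
        exact hnoB v hvU hGd
      simp only [Finset.mem_union, Finset.mem_inter, Finset.mem_sdiff, Finset.mem_filter,
        Finset.mem_univ] at hvU ⊢
      rcases hvU with h1 | h2
      · by_cases hv2 : v ∈ F2
        · tauto
        · tauto
      · by_cases hv1 : v ∈ F1
        · tauto
        · tauto
  have hA1 : ((F1 \ F2).filter (fun v => Gd.Adj u v)).card ≤ 1 := by
    by_contra hgt
    push_neg at hgt
    obtain ⟨a, ha, b, hb, hab⟩ := Finset.one_lt_card.mp hgt
    rw [Finset.mem_filter] at ha hb
    exact hind (Or.inr (Or.inl ⟨a, b, u, ha.1, hb.1, hab, hu, ha.2.symm, hb.2.symm⟩))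
  have hA2 : ((F2 \ F1).filter (fun v => Gd.Adj u v)).card ≤ 1 := by
    by_contra hgt
    push_neg at hgt
    obtain ⟨a, ha, b, hb, hab⟩ := Finset.one_lt_card.mp hgt
    rw [Finset.mem_filter] at ha hb
    exact hind (Or.inr (Or.inr ⟨a, b, u, ha.1, hb.1, hab, hu, ha.2.symm, hb.2.symm⟩))
  have hT : (univ.filter (fun v => s(u,v) ∈ Fe)).card ≤ Fe.card := by
    apply Finset.card_le_card_of_injOn (fun v => s(u,v))
    · intro v hv
      simpa using (Finset.mem_filter.mp hv).2
    · intro a _ b _ hab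
      exact Sym2.congr_right.mp hab
  have hdeg : G.degree u ≤ (F1 ∩ F2).card + 1 + 1 + Fe.card := by
    have cdeg : G.degree u = (G.neighborFinset u).card := rfl
    have := Finset.card_le_card hsub
    have u1 := Finset.card_union_le ((F1 ∩ F2) ∪ ((F1 \ F2).filter (fun v => Gd.Adj u v))
      ∪ ((F2 \ F1).filter (fun v => Gd.Adj u v))) (univ.filter (fun v => s(u,v) ∈ Fe))
    have u2 := Finset.card_union_le ((F1 ∩ F2) ∪ ((F1 \ F2).filter (fun v => Gd.Adj u v)))
      ((F2 \ F1).filter (fun v => Gd.Adj u v))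
    have u3 := Finset.card_union_le (F1 ∩ F2) ((F1 \ F2).filter (fun v => Gd.Adj u v))
    omega
  have hdegt : t ≤ G.degree u := hmindeg u
  constructor <;> omega
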